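/- For any d ≥ 1 and L ≥ 1, the d-dimensional Morton index restricted to anchors of level-l cubes is order-embedding with respect to the descendant relation: if cube A (level l_A) is an ancestor of cube B (level l_B ≥ l_A), then m(anchor(A)) ≤ m(anchor(B)), and conversely if m(anchor(A)) ≤ m(anchor(B)) < m(anchor(A)) + 2^{d(L−l_A)} then B's anchor lies in A. -/

import Mathlib

open Finset

def morton (d L : ℕ) (p : Fin d → ℕ) : ℕ :=
  ∑ j ∈ Finset.range L, ∑ i : Fin d, ((p i).testBit j).toNat * 2 ^ (d * j + (i : ℕ))

private lemma sum_bits_lt (n : ℕ) (c : ℕ → ℕ) (hc : ∀ k, c k ≤ 1) :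
    ∑ k ∈ range n, c k * 2 ^ k < 2 ^ n := by
  induction n with
  | zero => simp
  | succ n ih =>
    rw [Finset.sum_range_succ, pow_succ]
    have h1 : c n * 2 ^ n ≤ 2 ^ n := by
      calc c n * 2 ^ n ≤ 1 * 2 ^ n := Nat.mul_le_mul (hc n) (le_refl _)
        _ = 2 ^ n := one_mul _
    omega

private lemma bits_inj (n : ℕ) (c c' : ℕ → ℕ) (hc : ∀ k, c k ≤ 1) (hc' : ∀ k, c' k ≤ 1)
    (h : ∑ k ∈ range n, c k * 2 ^ k = ∑ k ∈ range n, c' k * 2 ^ k) :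
    ∀ k < n, c k = c' k := by
  induction n with
  | zero => intro k hk; omega
  | succ n ih =>
    rw [Finset.sum_range_succ, Finset.sum_range_succ] at h
    have h1 := sum_bits_lt n c hc
    have h2 := sum_bits_lt n c' hc'
    have key : c n = c' n ∧
        (∑ k ∈ range n, c k * 2 ^ k) = ∑ k ∈ range n, c' k * 2 ^ k := by
      rcases Nat.le_one_iff_eq_zero_or_eq_one.mp (hc n) with h0 | h0 <;>
        rcases Nat.le_one_iff_eq_zero_or_eq_one.mp (hc' n) with h0' | h0' <;>
        rw [h0, h0'] at h <;>
        simp only [zero_mul, one_mul, add_zero] at h <;>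
        exact ⟨by omega, by omega⟩
    intro k hk
    rcases Nat.lt_succ_iff_lt_or_eq.mp hk with hk' | rfl
    · exact ih key.2 k hk'
    · exact key.1

private lemma sum_interleave (d : ℕ) (f : ℕ → ℕ) (s : ℕ) :
    ∑ j ∈ range s, ∑ i ∈ range d, f (d * j + i) = ∑ k ∈ range (d * s), f k := by
  induction s with
  | zero => simp
  | succ s ih => rw [Finset.sum_range_succ, ih, Nat.mul_succ, Finset.sum_range_add]

private lemma interleave_eq (d L : ℕ) (hd : 0 < d) (c : Fin d → ℕ → ℕ) :
    (∑ j ∈ range L, ∑ i : Fin d, c i j * 2 ^ (d * j + (i : ℕ)))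
      = ∑ k ∈ range (d * L), c ⟨k % d, Nat.mod_lt k hd⟩ (k / d) * 2 ^ k := by
  rw [← sum_interleave d (fun k => c ⟨k % d, Nat.mod_lt k hd⟩ (k / d) * 2 ^ k) L]
  refine Finset.sum_congr rfl fun j _ => ?_
  rw [← Fin.sum_univ_eq_sum_range (fun i =>
    (fun k => c ⟨k % d, Nat.mod_lt k hd⟩ (k / d) * 2 ^ k) (d * j + i)) d]
  refine Finset.sum_congr rfl fun i _ => ?_
  have h1 : (d * j + (i : ℕ)) % d = (i : ℕ) := by
    rw [Nat.mul_add_mod, Nat.mod_eq_of_lt i.isLt]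
  have h2 : (d * j + (i : ℕ)) / d = j := by
    rw [Nat.mul_add_div hd, Nat.div_eq_of_lt i.isLt, add_zero]
  simp only [h1, h2, Fin.eta]

private def mbit (d : ℕ) (hd : 0 < d) (p : Fin d → ℕ) (k : ℕ) : ℕ :=
  ((p ⟨k % d, Nat.mod_lt k hd⟩).testBit (k / d)).toNat

private lemma mbit_le_one (d : ℕ) (hd : 0 < d) (p : Fin d → ℕ) (k : ℕ) :
    mbit d hd p k ≤ 1 := by
  unfold mbit
  cases (p ⟨k % d, Nat.mod_lt k hd⟩).testBit (k / d) <;> simp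

private lemma morton_eq (d L : ℕ) (hd : 0 < d) (p : Fin d → ℕ) :
    morton d L p = ∑ k ∈ range (d * L), mbit d hd p k * 2 ^ k := by
  unfold morton mbit
  exact interleave_eq d L hd fun i j => ((p i).testBit j).toNat

private lemma mbit_val (d : ℕ) (hd : 0 < d) (p : Fin d → ℕ) (j : ℕ) (i : Fin d) :
    mbit d hd p (d * j + (i : ℕ)) = ((p i).testBit j).toNat := by
  unfold mbit
  have h1 : (d * j + (i : ℕ)) % d = (i : ℕ) := by
    rw [Nat.mul_add_mod, Nat.mod_eq_of_lt i.isLt]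
  have h2 : (d * j + (i : ℕ)) / d = j := by
    rw [Nat.mul_add_div hd, Nat.div_eq_of_lt i.isLt, add_zero]
  simp only [h1, h2, Fin.eta]

/-- Order-embedding property of the Morton index with respect to the
cube descendant relation. -/
theorem morton_order_embedding (d L lA lB : ℕ) (hd : 1 ≤ d) (hL : 1 ≤ L)
    (hlA : lA ≤ L) (hlB : lB ≤ L) (hll : lA ≤ lB)
    (a b : Fin d → ℕ)
    (ha : ∀ i, a i < 2 ^ L ∧ 2 ^ (L - lA) ∣ a i)
    (hb : ∀ i, b i < 2 ^ L ∧ 2 ^ (L - lB) ∣ b i) :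
    ((∀ i, a i ≤ b i ∧ b i < a i + 2 ^ (L - lA)) → morton d L a ≤ morton d L b) ∧
    ((morton d L a ≤ morton d L b ∧ morton d L b < morton d L a + 2 ^ (d * (L - lA))) →
      ∀ i, a i ≤ b i ∧ b i < a i + 2 ^ (L - lA)) := by
  have hd0 : 0 < d := hd
  set s := L - lA with hs
  have hsL : s ≤ L := Nat.sub_le _ _
  have h2s : 0 < 2 ^ (d * s) := Nat.pow_pos (by norm_num)
  -- low bits of a vanish
  have haLow : ∀ i : Fin d, ∀ j, j < s → (a i).testBit j = false := by
    intro i j hj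
    obtain ⟨q, hq⟩ := (ha i).2
    rw [hq, Nat.testBit_two_pow_mul]
    simp [show ¬ s ≤ j from by omega]
  have hTop : ∀ x : ℕ, x < 2 ^ L → ∀ j, L ≤ j → x.testBit j = false := by
    intro x hx j hj
    exact Nat.testBit_lt_two_pow
      (lt_of_lt_of_le hx (Nat.pow_le_pow_right (by norm_num) hj))
  -- descendant relation iff equal quotients
  have hdesc_iff : ∀ i : Fin d,
      (a i ≤ b i ∧ b i < a i + 2 ^ s) ↔ b i / 2 ^ s = a i / 2 ^ s := by
    intro i
    obtain ⟨q, hq⟩ := (ha i).2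
    have hq2 : a i / 2 ^ s = q := by
      rw [hq]; exact Nat.mul_div_cancel_left q (Nat.pow_pos (by norm_num))
    constructor
    · rintro ⟨hle, hlt⟩
      have hub : b i / 2 ^ s < q + 1 := by
        apply Nat.div_lt_of_lt_mul
        rw [Nat.mul_add, Nat.mul_one]
        omega
      have hlb : q ≤ b i / 2 ^ s := by
        rw [Nat.le_div_iff_mul_le (Nat.pow_pos (by norm_num))]
        rw [Nat.mul_comm]
        omega
      omega
    · intro h
      have hmod := Nat.div_add_mod (b i) (2 ^ s)
      have hml : b i % 2 ^ s < 2 ^ s :=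
        Nat.mod_lt _ (Nat.pow_pos (by norm_num))
      rw [h, hq2, ← hq] at hmod
      omega
  -- equal quotients iff equal high bits
  have hdiv_iff : ∀ x y : ℕ, x / 2 ^ s = y / 2 ^ s ↔
      ∀ j, s ≤ j → x.testBit j = y.testBit j := by
    intro x y
    constructor
    · intro h j hj
      have hje : j = s + (j - s) := by omega
      rw [hje, ← Nat.testBit_shiftRight, ← Nat.testBit_shiftRight,
        Nat.shiftRight_eq_div_pow, Nat.shiftRight_eq_div_pow, h]
    · intro h
      apply Nat.eq_of_testBit_eq
      intro j
      rw [← Nat.shiftRight_eq_div_pow, ← Nat.shiftRight_eq_div_pow,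
        Nat.testBit_shiftRight, Nat.testBit_shiftRight]
      exact h (s + j) (Nat.le_add_right _ _)
  constructor
  · -- forward direction
    intro hdesc
    unfold morton
    refine Finset.sum_le_sum fun j _ => Finset.sum_le_sum fun i _ => ?_
    refine Nat.mul_le_mul ?_ (le_refl _)
    rcases lt_or_ge j s with hj | hj
    · rw [haLow i j hj]
      exact Nat.zero_le _
    · have hbe := (hdiv_iff (b i) (a i)).mp ((hdesc_iff i).mp (hdesc i)) j hj
      rw [← hbe]
  · -- converse direction
    rintro ⟨hm1, hm2⟩ i
    have hA := morton_eq d L hd0 a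
    have hB := morton_eq d L hd0 b
    have haLow' : ∀ k, k < d * s → mbit d hd0 a k = 0 := by
      intro k hk
      have hkd : k / d < s := Nat.div_lt_of_lt_mul hk
      unfold mbit
      rw [haLow _ _ hkd]
      rfl
    have hAhi : morton d L a
        = ∑ k ∈ range (d * L), (if d * s ≤ k then mbit d hd0 a k else 0) * 2 ^ k := by
      rw [hA]
      refine Finset.sum_congr rfl fun k _ => ?_
      split_ifs with h
      · rfl
      · rw [haLow' k (by omega)]
    have hBsplit : morton d L b
        = (∑ k ∈ range (d * L), (if k < d * s then mbit d hd0 b k else 0) * 2 ^ k)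
          + ∑ k ∈ range (d * L), (if d * s ≤ k then mbit d hd0 b k else 0) * 2 ^ k := by
      rw [hB, ← Finset.sum_add_distrib]
      refine Finset.sum_congr rfl fun k _ => ?_
      rcases lt_or_ge k (d * s) with h | h
      · simp [h, Nat.not_le.mpr h]
      · simp [h, Nat.not_lt.mpr h]
    have hsub : range (d * s) ⊆ range (d * L) :=
      Finset.range_subset_range.mpr (Nat.mul_le_mul (le_refl d) hsL)
    have hlo_lt : (∑ k ∈ range (d * L),
        (if k < d * s then mbit d hd0 b k else 0) * 2 ^ k) < 2 ^ (d * s) := by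
      rw [← Finset.sum_subset hsub (fun x _ hx => by
        simp [show ¬ x < d * s from fun hc => hx (Finset.mem_range.mpr hc)])]
      apply sum_bits_lt
      intro k
      split_ifs
      · exact mbit_le_one d hd0 b k
      · omega
    have hdvdA : 2 ^ (d * s) ∣
        ∑ k ∈ range (d * L), (if d * s ≤ k then mbit d hd0 a k else 0) * 2 ^ k := by
      refine Finset.dvd_sum fun k _ => ?_
      split_ifs with h
      · exact Dvd.dvd.mul_left (pow_dvd_pow 2 h) _
      · simp
    have hdvdB : 2 ^ (d * s) ∣
        ∑ k ∈ range (d * L), (if d * s ≤ k then mbit d hd0 b k else 0) * 2 ^ k := by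
      refine Finset.dvd_sum fun k _ => ?_
      split_ifs with h
      · exact Dvd.dvd.mul_left (pow_dvd_pow 2 h) _
      · simp
    obtain ⟨u, hu⟩ := hdvdA
    obtain ⟨v, hv⟩ := hdvdB
    rw [hAhi] at hm1 hm2
    rw [hBsplit] at hm1 hm2
    have hHeq : (∑ k ∈ range (d * L), (if d * s ≤ k then mbit d hd0 a k else 0) * 2 ^ k)
        = ∑ k ∈ range (d * L), (if d * s ≤ k then mbit d hd0 b k else 0) * 2 ^ k := by
      have h1 : u ≤ v := by
        by_contra hc
        push_neg at hc
        have hge : (∑ k ∈ range (d * L), (if d * s ≤ k then mbit d hd0 b k else 0) * 2 ^ k)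
            + 2 ^ (d * s)
            ≤ ∑ k ∈ range (d * L), (if d * s ≤ k then mbit d hd0 a k else 0) * 2 ^ k := by
          rw [hu, hv]
          calc 2 ^ (d * s) * v + 2 ^ (d * s) = 2 ^ (d * s) * (v + 1) := by ring
            _ ≤ 2 ^ (d * s) * u := Nat.mul_le_mul (le_refl _) hc
        omega
      have h2 : v ≤ u := by
        by_contra hc
        push_neg at hc
        have hge : (∑ k ∈ range (d * L), (if d * s ≤ k then mbit d hd0 a k else 0) * 2 ^ k)
            + 2 ^ (d * s)
            ≤ ∑ k ∈ range (d * L), (if d * s ≤ k then mbit d hd0 b k else 0) * 2 ^ k := by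
          rw [hu, hv]
          calc 2 ^ (d * s) * u + 2 ^ (d * s) = 2 ^ (d * s) * (u + 1) := by ring
            _ ≤ 2 ^ (d * s) * v := Nat.mul_le_mul (le_refl _) hc
        omega
      rw [hu, hv, le_antisymm h1 h2]
    have hbits := bits_inj (d * L)
      (fun k => if d * s ≤ k then mbit d hd0 a k else 0)
      (fun k => if d * s ≤ k then mbit d hd0 b k else 0)
      (fun k => by split_ifs <;> first | exact mbit_le_one d hd0 a k | omega)
      (fun k => by split_ifs <;> first | exact mbit_le_one d hd0 b k | omega)
      hHeq
    have hhi_eq : ∀ j, s ≤ j → (b i).testBit j = (a i).testBit j := by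
      intro j hj
      rcases lt_or_ge j L with hjL | hjL
      · have hk : d * j + (i : ℕ) < d * L := by
          have hi : (i : ℕ) < d := i.isLt
          calc d * j + (i : ℕ) < d * j + d := by omega
            _ = d * (j + 1) := by ring
            _ ≤ d * L := Nat.mul_le_mul (le_refl d) (by omega)
        have hk2 : d * s ≤ d * j + (i : ℕ) :=
          le_trans (Nat.mul_le_mul (le_refl d) hj) (Nat.le_add_right _ _)
        have hbk := hbits (d * j + (i : ℕ)) hk
        simp only [if_pos hk2] at hbk
        rw [mbit_val, mbit_val] at hbk
        cases h1 : (a i).testBit j <;> cases h2 : (b i).testBit j <;>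
          simp [h1, h2] at hbk ⊢
      · rw [hTop (a i) (ha i).1 j hjL, hTop (b i) (hb i).1 j hjL]
    exact (hdesc_iff i).mpr ((hdiv_iff (b i) (a i)).mpr hhi_eq)
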